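/- There exist infinitely many bipartite 2-connected simple graphs G with spc(G) ≥ 4; that is, for every natural number n there is a bipartite 2-connected simple graph G with more than n vertices such that no edge coloring of G with 3 colors is strongly proper connected. -/

import Mathlib

open SimpleGraph

/-- A list of colors is *strongly proper* if any two of its terms at distance
at most 2 are distinct. -/
def StronglyProperSeq {α : Type*} (l : List α) : Prop :=
  ∀ i j : ℕ, i < j → j ≤ i + 2 → ∀ (hi : i < l.length) (hj : j < l.length),
    l.get ⟨i, hi⟩ ≠ l.get ⟨j, hj⟩

/-- An edge coloring of `G` is strongly proper connected if every pair of distinct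
vertices is joined by a path whose sequence of edge colors is strongly proper. -/
def IsStronglyProperConnected {V : Type*} (G : SimpleGraph V) {β : Type*}
    (c : Sym2 V → β) : Prop :=
  ∀ u v : V, u ≠ v → ∃ p : G.Walk u v, p.IsPath ∧ StronglyProperSeq (p.edges.map c)

/-- `G` is `k`-connected: it has more than `k` vertices and deleting any set of
fewer than `k` vertices leaves a connected graph. -/
def KConnected {V : Type*} (k : ℕ) (G : SimpleGraph V) : Prop :=
  k < Nat.card V ∧
    ∀ S : Set V, S.Finite → S.ncard < k → (G.induce Sᶜ).Connected

/-- `G` is bipartite: its vertex set is partitioned into two independent sets. -/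
def Bipartite {V : Type*} (G : SimpleGraph V) : Prop :=
  ∃ W : Set V, (∀ u v, u ∈ W → v ∈ W → ¬ G.Adj u v) ∧
    (∀ u v, u ∉ W → v ∉ W → ¬ G.Adj u v)

namespace ThetaGadget

inductive Vtx (k : ℕ) : Type where
  | U : Vtx k
  | V : Vtx k
  | X : Fin k → Vtx k
  | Y : Fin k → Vtx k
  | Z : Fin k → Vtx k
deriving DecidableEq

open Vtx

def adj {k : ℕ} : Vtx k → Vtx k → Prop
  | U, X _ => True
  | X _, U => True
  | X i, Y j => i = j
  | Y i, X j => i = j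
  | Y i, Z j => i = j
  | Z i, Y j => i = j
  | Z _, V => True
  | V, Z _ => True
  | _, _ => False

def theta (k : ℕ) : SimpleGraph (Vtx k) where
  Adj := adj
  symm := ⟨by intro a b h; cases a <;> cases b <;> simp_all [adj]⟩
  loopless := ⟨by intro a h; cases a <;> simp_all [adj]⟩



lemma sp2 {α : Type*} {x0 x1 : α} (h : StronglyProperSeq [x0, x1]) : x0 ≠ x1 := by
  simpa using h 0 1 (by norm_num) (by norm_num) (by simp) (by simp)

lemma sp6 {α : Type*} {x0 x1 x2 x3 x4 x5 : α}
    (h : StronglyProperSeq [x0, x1, x2, x3, x4, x5]) :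
    x0 ≠ x1 ∧ x0 ≠ x2 ∧ x1 ≠ x2 ∧ x1 ≠ x3 ∧ x2 ≠ x3 ∧ x2 ≠ x4 ∧ x3 ≠ x4 ∧ x3 ≠ x5 ∧ x4 ≠ x5 := by
  refine ⟨?_, ?_, ?_, ?_, ?_, ?_, ?_, ?_, ?_⟩ <;>
    first
    | simpa using h 0 1 (by norm_num) (by norm_num) (by simp) (by simp)
    | simpa using h 0 2 (by norm_num) (by norm_num) (by simp) (by simp)
    | simpa using h 1 2 (by norm_num) (by norm_num) (by simp) (by simp)
    | simpa using h 1 3 (by norm_num) (by norm_num) (by simp) (by simp)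
    | simpa using h 2 3 (by norm_num) (by norm_num) (by simp) (by simp)
    | simpa using h 2 4 (by norm_num) (by norm_num) (by simp) (by simp)
    | simpa using h 3 4 (by norm_num) (by norm_num) (by simp) (by simp)
    | simpa using h 3 5 (by norm_num) (by norm_num) (by simp) (by simp)
    | simpa using h 4 5 (by norm_num) (by norm_num) (by simp) (by simp)

lemma sp8 {α : Type*} {x0 x1 x2 x3 x4 x5 x6 x7 : α}
    (h : StronglyProperSeq [x0, x1, x2, x3, x4, x5, x6, x7]) :
    x0 ≠ x1 ∧ x0 ≠ x2 ∧ x1 ≠ x2 ∧ x1 ≠ x3 ∧ x2 ≠ x3 ∧ x2 ≠ x4 ∧ x3 ≠ x4 ∧ x3 ≠ x5 ∧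
    x4 ≠ x5 ∧ x4 ≠ x6 ∧ x5 ≠ x6 ∧ x5 ≠ x7 ∧ x6 ≠ x7 := by
  refine ⟨?_, ?_, ?_, ?_, ?_, ?_, ?_, ?_, ?_, ?_, ?_, ?_, ?_⟩ <;>
    first
    | simpa using h 0 1 (by norm_num) (by norm_num) (by simp) (by simp)
    | simpa using h 0 2 (by norm_num) (by norm_num) (by simp) (by simp)
    | simpa using h 1 2 (by norm_num) (by norm_num) (by simp) (by simp)
    | simpa using h 1 3 (by norm_num) (by norm_num) (by simp) (by simp)
    | simpa using h 2 3 (by norm_num) (by norm_num) (by simp) (by simp)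
    | simpa using h 2 4 (by norm_num) (by norm_num) (by simp) (by simp)
    | simpa using h 3 4 (by norm_num) (by norm_num) (by simp) (by simp)
    | simpa using h 3 5 (by norm_num) (by norm_num) (by simp) (by simp)
    | simpa using h 4 5 (by norm_num) (by norm_num) (by simp) (by simp)
    | simpa using h 4 6 (by norm_num) (by norm_num) (by simp) (by simp)
    | simpa using h 5 6 (by norm_num) (by norm_num) (by simp) (by simp)
    | simpa using h 5 7 (by norm_num) (by norm_num) (by simp) (by simp)
    | simpa using h 6 7 (by norm_num) (by norm_num) (by simp) (by simp)

lemma f3 : ∀ {x y z w : Fin 3}, x ≠ y → z ≠ x → z ≠ y → w ≠ x → w ≠ y → z = w := by decide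


variable {k : ℕ}


def vtxEquiv (k : ℕ) : Vtx k ≃ (Fin 2 ⊕ (Fin 3 × Fin k)) where
  toFun := fun w => match w with
    | U => Sum.inl 0
    | V => Sum.inl 1
    | X i => Sum.inr (0, i)
    | Y i => Sum.inr (1, i)
    | Z i => Sum.inr (2, i)
  invFun := fun s => match s with
    | Sum.inl 0 => U
    | Sum.inl 1 => V
    | Sum.inr (0, i) => X i
    | Sum.inr (1, i) => Y i
    | Sum.inr (2, i) => Z i
  left_inv := by intro w; cases w <;> rfl
  right_inv := by
    rintro (b | ⟨j, i⟩)
    · fin_cases b <;> rfl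
    · fin_cases j <;> rfl

lemma card_vtx (k : ℕ) : Nat.card (Vtx k) = 3 * k + 2 := by
  rw [Nat.card_congr (vtxEquiv k)]
  simp [Nat.card_sum, Nat.card_prod, Nat.card_eq_fintype_card]
  ring



lemma conn (hk : 2 ≤ k) (T : Set (Vtx k)) (hT : ∀ a b : Vtx k, a ∉ T → b ∉ T → a = b) :
    ((theta k).induce T).Connected := by
  have mem : ∀ (w w' : Vtx k), w ≠ w' → w ∉ T → w' ∈ T := by
    intro w w' hne hw
    by_contra h
    exact hne (hT _ _ hw h)
  have step : ∀ (a b : Vtx k) (ha : a ∈ T) (hb : b ∈ T), adj a b →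
      ((theta k).induce T).Adj ⟨a, ha⟩ ⟨b, hb⟩ := by
    intro a b ha hb h
    exact h
  set H := (theta k).induce T with hH
  -- two distinct indices
  obtain ⟨i0, i1, hij⟩ : ∃ i0 i1 : Fin k, i0 ≠ i1 :=
    ⟨⟨0, by omega⟩, ⟨1, by omega⟩, by simp⟩
  -- a fully-present branch
  have hbr : ∃ i : Fin k, X i ∈ T ∧ Y i ∈ T ∧ Z i ∈ T := by
    by_cases hX : X i0 ∈ T
    · by_cases hY : Y i0 ∈ T
      · by_cases hZ : Z i0 ∈ T
        · exact ⟨i0, hX, hY, hZ⟩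
        · exact ⟨i1, mem _ _ (by simp [hij, hij.symm]) hZ, mem _ _ (by simp [hij, hij.symm]) hZ,
            mem _ _ (by simp [hij, hij.symm]) hZ⟩
      · exact ⟨i1, mem _ _ (by simp [hij, hij.symm]) hY, mem _ _ (by simp [hij, hij.symm]) hY,
          mem _ _ (by simp [hij, hij.symm]) hY⟩
    · exact ⟨i1, mem _ _ (by simp [hij, hij.symm]) hX, mem _ _ (by simp [hij, hij.symm]) hX,
        mem _ _ (by simp [hij, hij.symm]) hX⟩
  obtain ⟨ib, hXb, hYb, hZb⟩ := hbr
  have hubreach : ∀ (a : Vtx k) (ha : a ∈ T), ∃ (c : Vtx k) (hc : c ∈ T),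
      (c = U ∨ c = V) ∧ H.Reachable ⟨a, ha⟩ ⟨c, hc⟩ := by
    intro a ha
    cases a with
    | U => exact ⟨U, ha, Or.inl rfl, Reachable.refl _⟩
    | V => exact ⟨V, ha, Or.inr rfl, Reachable.refl _⟩
    | X i =>
      by_cases hU : U ∈ T
      · exact ⟨U, hU, Or.inl rfl, (step _ _ ha hU (by trivial)).reachable⟩
      · have hY : Y i ∈ T := mem _ _ (by simp) hU
        have hZ : Z i ∈ T := mem _ _ (by simp) hU
        have hV : V ∈ T := mem _ _ (by simp) hU
        exact ⟨V, hV, Or.inr rfl,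
          ((step _ _ ha hY (by simp [adj])).reachable.trans
            ((step _ _ hY hZ (by simp [adj])).reachable.trans
              (step _ _ hZ hV (by trivial)).reachable))⟩
    | Y i =>
      by_cases hX : X i ∈ T
      · by_cases hU : U ∈ T
        · exact ⟨U, hU, Or.inl rfl,
            ((step _ _ ha hX (by simp [adj])).reachable.trans
              (step _ _ hX hU (by trivial)).reachable)⟩
        · have hZ : Z i ∈ T := mem _ _ (by simp) hU
          have hV : V ∈ T := mem _ _ (by simp) hU
          exact ⟨V, hV, Or.inr rfl,
            ((step _ _ ha hZ (by simp [adj])).reachable.trans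
              (step _ _ hZ hV (by trivial)).reachable)⟩
      · have hZ : Z i ∈ T := mem _ _ (by simp) hX
        have hV : V ∈ T := mem _ _ (by simp) hX
        exact ⟨V, hV, Or.inr rfl,
          ((step _ _ ha hZ (by simp [adj])).reachable.trans
            (step _ _ hZ hV (by trivial)).reachable)⟩
    | Z i =>
      by_cases hV : V ∈ T
      · exact ⟨V, hV, Or.inr rfl, (step _ _ ha hV (by trivial)).reachable⟩
      · have hY : Y i ∈ T := mem _ _ (by simp) hV
        have hX : X i ∈ T := mem _ _ (by simp) hV
        have hU : U ∈ T := mem _ _ (by simp) hV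
        exact ⟨U, hU, Or.inl rfl,
          ((step _ _ ha hY (by simp [adj])).reachable.trans
            ((step _ _ hY hX (by simp [adj])).reachable.trans
              (step _ _ hX hU (by trivial)).reachable))⟩
  have bridge : ∀ (hU : U ∈ T) (hV : V ∈ T), H.Reachable ⟨U, hU⟩ ⟨V, hV⟩ := by
    intro hU hV
    exact (step _ _ hU hXb (by trivial)).reachable.trans
      ((step _ _ hXb hYb (by simp [adj])).reachable.trans
        ((step _ _ hYb hZb (by simp [adj])).reachable.trans
          (step _ _ hZb hV (by trivial)).reachable))
  rw [connected_iff]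
  constructor
  · rintro ⟨a, ha⟩ ⟨b, hb⟩
    obtain ⟨ca, hca, hcau, ra⟩ := hubreach a ha
    obtain ⟨cb, hcb, hcbu, rb⟩ := hubreach b hb
    refine ra.trans (Reachable.trans ?_ rb.symm)
    rcases hcau with rfl | rfl <;> rcases hcbu with rfl | rfl
    · rfl
    · exact bridge hca hcb
    · exact (bridge hcb hca).symm
    · rfl
  · by_cases hU : U ∈ T
    · exact ⟨⟨U, hU⟩⟩
    · exact ⟨⟨V, mem _ _ (by simp) hU⟩⟩



lemma adj_U {w : Vtx k} (h : (theta k).Adj U w) : ∃ l, w = X l := by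
  cases w <;> simp_all [theta, adj]
lemma adj_V {w : Vtx k} (h : (theta k).Adj V w) : ∃ l, w = Z l := by
  cases w <;> simp_all [theta, adj]
lemma adj_X {i : Fin k} {w : Vtx k} (h : (theta k).Adj (X i) w) : w = U ∨ w = Y i := by
  cases w <;> simp_all [theta, adj]
lemma adj_Y {i : Fin k} {w : Vtx k} (h : (theta k).Adj (Y i) w) : w = X i ∨ w = Z i := by
  cases w <;> simp_all [theta, adj]
lemma adj_Z {i : Fin k} {w : Vtx k} (h : (theta k).Adj (Z i) w) : w = Y i ∨ w = V := by
  cases w <;> simp_all [theta, adj]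

lemma loop_nil {a : Vtx k} (q : (theta k).Walk a a) (h : q.support.Nodup) :
    q = SimpleGraph.Walk.nil := by
  cases q with
  | nil => rfl
  | cons h' r =>
    simp only [Walk.support_cons, List.nodup_cons] at h
    exact absurd r.end_mem_support h.1

lemma walk_XX_cases {m j : Fin k} (q : (theta k).Walk (X m) (X j)) :
    (q.edges = [] ∧ m = j) ∨
    ∃ (w : Vtx k) (h : (theta k).Adj (X m) w) (r : (theta k).Walk w (X j)),
      q = Walk.cons h r := by
  cases q with
  | nil => exact Or.inl ⟨rfl, rfl⟩
  | cons h r => exact Or.inr ⟨_, h, r, rfl⟩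

lemma pathClass (c : Sym2 (Vtx k) → Fin 3) {i j : Fin k} (hij : i ≠ j)
    (p : (theta k).Walk (X i) (X j)) (hp : p.IsPath)
    (hsp : StronglyProperSeq (p.edges.map c)) :
    StronglyProperSeq [c s(X i, U), c s(U, X j)]
  ∨ StronglyProperSeq [c s(X i, Y i), c s(Y i, Z i), c s(Z i, V),
      c s(V, Z j), c s(Z j, Y j), c s(Y j, X j)]
  ∨ (∃ l, l ≠ i ∧ l ≠ j ∧ StronglyProperSeq [c s(X i, U), c s(U, X l), c s(X l, Y l),
      c s(Y l, Z l), c s(Z l, V), c s(V, Z j), c s(Z j, Y j), c s(Y j, X j)])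
  ∨ (∃ l, l ≠ i ∧ l ≠ j ∧ StronglyProperSeq [c s(X i, Y i), c s(Y i, Z i), c s(Z i, V),
      c s(V, Z l), c s(Z l, Y l), c s(Y l, X l), c s(X l, U), c s(U, X j)]) := by
  cases p with
  | nil => exact absurd rfl hij
  | cons h1 q1 =>
  rw [Walk.cons_isPath_iff] at hp
  obtain ⟨hp1, hv1⟩ := hp
  simp only [Walk.edges_cons, List.map_cons] at hsp
  rcases adj_X h1 with rfl | rfl
  · -- X i → U
    cases q1 with
    | cons h2 q2 =>
    rw [Walk.cons_isPath_iff] at hp1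
    obtain ⟨hp2, hv2⟩ := hp1
    simp only [Walk.edges_cons, List.map_cons] at hsp
    obtain ⟨l, rfl⟩ := adj_U h2
    by_cases hlj : l = j
    · subst hlj
      have := loop_nil q2 hp2.support_nodup
      subst this
      simp only [Walk.edges_nil, List.map_nil] at hsp
      exact Or.inl hsp
    · cases q2 with
      | nil => exact absurd rfl hlj
      | cons h3 q3 =>
      rw [Walk.cons_isPath_iff] at hp2
      obtain ⟨hp3, hv3⟩ := hp2
      simp only [Walk.edges_cons, List.map_cons] at hsp
      rcases adj_X h3 with rfl | rfl
      · simp at hv2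
      · cases q3 with
        | cons h4 q4 =>
        rw [Walk.cons_isPath_iff] at hp3
        obtain ⟨hp4, hv4⟩ := hp3
        simp only [Walk.edges_cons, List.map_cons] at hsp
        rcases adj_Y h4 with rfl | rfl
        · simp at hv3
        · cases q4 with
          | cons h5 q5 =>
          rw [Walk.cons_isPath_iff] at hp4
          obtain ⟨hp5, hv5⟩ := hp4
          simp only [Walk.edges_cons, List.map_cons] at hsp
          rcases adj_Z h5 with rfl | rfl
          · simp at hv4
          · cases q5 with
            | cons h6 q6 =>
            rw [Walk.cons_isPath_iff] at hp5
            obtain ⟨hp6, hv6⟩ := hp5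
            simp only [Walk.edges_cons, List.map_cons] at hsp
            obtain ⟨m, rfl⟩ := adj_V h6
            by_cases hmj : m = j
            · subst hmj
              cases q6 with
              | cons h7 q7 =>
              rw [Walk.cons_isPath_iff] at hp6
              obtain ⟨hp7, hv7⟩ := hp6
              simp only [Walk.edges_cons, List.map_cons] at hsp
              rcases adj_Z h7 with rfl | rfl
              · -- Y j
                cases q7 with
                | cons h8 q8 =>
                rw [Walk.cons_isPath_iff] at hp7
                obtain ⟨hp8, hv8⟩ := hp7
                simp only [Walk.edges_cons, List.map_cons] at hsp
                rcases adj_Y h8 with rfl | rfl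
                · -- X j : done
                  have := loop_nil q8 hp8.support_nodup
                  subst this
                  simp only [Walk.edges_nil, List.map_nil] at hsp
                  have hli : l ≠ i := by
                    rintro rfl
                    exact hv1 (by simp)
                  exact Or.inr (Or.inr (Or.inl ⟨l, hli, hlj, hsp⟩))
                · simp at hv7
              · simp at hv6
            · cases q6 with
              | cons h7 q7 =>
              rw [Walk.cons_isPath_iff] at hp6
              obtain ⟨hp7, hv7⟩ := hp6
              rcases adj_Z h7 with rfl | rfl
              · -- Y m
                cases q7 with
                | cons h8 q8 =>
                rw [Walk.cons_isPath_iff] at hp7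
                obtain ⟨hp8, hv8⟩ := hp7
                rcases adj_Y h8 with rfl | rfl
                · -- X m
                  cases q8 with
                  | nil => exact absurd rfl hmj
                  | cons h9 q9 =>
                  rw [Walk.cons_isPath_iff] at hp8
                  obtain ⟨hp9, hv9⟩ := hp8
                  rcases adj_X h9 with rfl | rfl
                  · simp at hv2
                  · simp at hv8
                · simp at hv7
              · simp at hv6
  · -- X i → Y i
    cases q1 with
    | cons h2 q2 =>
    rw [Walk.cons_isPath_iff] at hp1
    obtain ⟨hp2, hv2⟩ := hp1
    simp only [Walk.edges_cons, List.map_cons] at hsp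
    rcases adj_Y h2 with rfl | rfl
    · simp at hv1
    · -- Z i
      cases q2 with
      | cons h3 q3 =>
      rw [Walk.cons_isPath_iff] at hp2
      obtain ⟨hp3, hv3⟩ := hp2
      simp only [Walk.edges_cons, List.map_cons] at hsp
      rcases adj_Z h3 with rfl | rfl
      · simp at hv2
      · -- V
        cases q3 with
        | cons h4 q4 =>
        rw [Walk.cons_isPath_iff] at hp3
        obtain ⟨hp4, hv4⟩ := hp3
        simp only [Walk.edges_cons, List.map_cons] at hsp
        obtain ⟨m, rfl⟩ := adj_V h4
        cases q4 with
        | cons h5 q5 =>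
        rw [Walk.cons_isPath_iff] at hp4
        obtain ⟨hp5, hv5⟩ := hp4
        simp only [Walk.edges_cons, List.map_cons] at hsp
        rcases adj_Z h5 with rfl | rfl
        · -- Y m
          cases q5 with
          | cons h6 q6 =>
          rw [Walk.cons_isPath_iff] at hp5
          obtain ⟨hp6, hv6⟩ := hp5
          simp only [Walk.edges_cons, List.map_cons] at hsp
          rcases adj_Y h6 with rfl | rfl
          · -- X m
            rcases walk_XX_cases q6 with ⟨he, rfl⟩ | ⟨w7, h7, q7, rfl⟩
            · rw [he] at hsp
              simp only [List.map_nil] at hsp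
              exact Or.inr (Or.inl hsp)
            · rw [Walk.cons_isPath_iff] at hp6
              obtain ⟨hp7, hv7⟩ := hp6
              simp only [Walk.edges_cons, List.map_cons] at hsp
              rcases adj_X h7 with rfl | rfl
              · -- U
                cases q7 with
                | cons h8 q8 =>
                rw [Walk.cons_isPath_iff] at hp7
                obtain ⟨hp8, hv8⟩ := hp7
                simp only [Walk.edges_cons, List.map_cons] at hsp
                obtain ⟨l, rfl⟩ := adj_U h8
                by_cases hlj : l = j
                · subst hlj
                  have := loop_nil q8 hp8.support_nodup
                  subst this
                  simp only [Walk.edges_nil, List.map_nil] at hsp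
                  have hmj : m ≠ l := by
                    rintro rfl
                    exact hv7 (by simp)
                  have hmi : m ≠ i := by
                    rintro rfl
                    exact hv3 (by simp)
                  exact Or.inr (Or.inr (Or.inr ⟨m, hmi, hmj, hsp⟩))
                · rcases walk_XX_cases q8 with ⟨he, rfl⟩ | ⟨w9, h9, q9, rfl⟩
                  · exact absurd rfl hlj
                  · rw [Walk.cons_isPath_iff] at hp8
                    obtain ⟨hp9, hv9⟩ := hp8
                    rcases adj_X h9 with rfl | rfl
                    · simp at hv8
                    · -- Y l
                      cases q9 with
                      | cons h10 q10 =>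
                      rw [Walk.cons_isPath_iff] at hp9
                      obtain ⟨hp10, hv10⟩ := hp9
                      rcases adj_Y h10 with rfl | rfl
                      · simp at hv9
                      · -- Z l
                        cases q10 with
                        | cons h11 q11 =>
                        rw [Walk.cons_isPath_iff] at hp10
                        obtain ⟨hp11, hv11⟩ := hp10
                        rcases adj_Z h11 with rfl | rfl
                        · simp at hv10
                        · simp at hv4
              · simp at hv6
          · simp at hv5
        · simp at hv4



def cA (c : Sym2 (Vtx k) → Fin 3) (i : Fin k) : Fin 3 := c s(U, X i)
def cB (c : Sym2 (Vtx k) → Fin 3) (i : Fin k) : Fin 3 := c s(X i, Y i)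
def cC (c : Sym2 (Vtx k) → Fin 3) (i : Fin k) : Fin 3 := c s(Y i, Z i)
def cD (c : Sym2 (Vtx k) → Fin 3) (i : Fin k) : Fin 3 := c s(Z i, V)

def Sp (c : Sym2 (Vtx k) → Fin 3) (m : Fin k) : Prop :=
  cC c m = cA c m ∧ cB c m ≠ cC c m ∧ cC c m ≠ cD c m ∧ cB c m ≠ cD c m

lemma Xalg (c : Sym2 (Vtx k) → Fin 3) {i j : Fin k} (hij : i ≠ j) (ha : cA c i = cA c j)
    (hex : ∃ p : (theta k).Walk (X i) (X j), p.IsPath ∧ StronglyProperSeq (p.edges.map c)) :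
    (cC c i = cC c j ∧ cB c i = cD c j ∧ cB c j = cD c i ∧ cD c i ≠ cD c j) ∨ Sp c i ∨ Sp c j := by
  obtain ⟨p, hp, hsp⟩ := hex
  rcases pathClass c hij p hp hsp with h | h | ⟨l, hli, hlj, h⟩ | ⟨l, hli, hlj, h⟩
  · rw [show s(X i, U) = s(U, X i) from Sym2.eq_swap] at h
    exact absurd ha (sp2 h)
  · rw [show s(V, Z j) = s(Z j, V) from Sym2.eq_swap,
        show s(Z j, Y j) = s(Y j, Z j) from Sym2.eq_swap,
        show s(Y j, X j) = s(X j, Y j) from Sym2.eq_swap] at h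
    obtain ⟨e1, e2, e3, e4, e5, e6, e7, e8, e9⟩ := sp6 h
    simp only [cA, cB, cC, cD] at ha ⊢
    refine Or.inl ⟨f3 e5 e3 e4 e6.symm e7.symm, f3 e3 e1 e2 e4.symm e5.symm,
      f3 e7.symm e9.symm e8.symm e6 e5, e5⟩
  · rw [show s(X i, U) = s(U, X i) from Sym2.eq_swap,
        show s(V, Z j) = s(Z j, V) from Sym2.eq_swap,
        show s(Z j, Y j) = s(Y j, Z j) from Sym2.eq_swap,
        show s(Y j, X j) = s(X j, Y j) from Sym2.eq_swap] at h
    obtain ⟨e1, e2, e3, e4, e5, e6, e7, e8, e9, e10, e11, e12, e13⟩ := sp8 h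
    have hDA : c s(Z l, V) = c s(U, X l) := f3 e5 e6.symm e7.symm e3 e4
    have hAC : c s(U, X i) = c s(Y l, Z l) := f3 e3 e1 e2 e4.symm e5.symm
    have e9' := e9.symm; rw [hDA] at e9'
    have hDB : c s(Z j, V) = c s(X l, Y l) := f3 e4.symm e8.symm e9' e5 e3.symm
    have e10' := e10.symm; rw [hDA] at e10'
    have e11' := e11.symm; rw [hDB] at e11'
    have hCC : c s(Y j, Z j) = c s(Y l, Z l) := f3 e3 e10' e11' e4.symm e5.symm
    have e12' := e12.symm; rw [hDB] at e12'
    have e13' := e13.symm; rw [hCC] at e13'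
    have hBA : c s(X j, Y j) = c s(U, X l) := f3 e5 e12' e13' e3 e4
    simp only [cA, cB, cC, cD, Sp] at ha ⊢
    refine Or.inr (Or.inr ⟨hCC.trans (hAC.symm.trans ha), ?_, ?_, ?_⟩)
    · rw [hBA, hCC]; exact e4
    · rw [hCC, hDB]; exact e5.symm
    · rw [hBA, hDB]; exact e3
  · rw [show s(V, Z l) = s(Z l, V) from Sym2.eq_swap,
        show s(Z l, Y l) = s(Y l, Z l) from Sym2.eq_swap,
        show s(Y l, X l) = s(X l, Y l) from Sym2.eq_swap,
        show s(X l, U) = s(U, X l) from Sym2.eq_swap] at h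
    obtain ⟨e1, e2, e3, e4, e5, e6, e7, e8, e9, e10, e11, e12, e13⟩ := sp8 h
    have hDA : c s(Z l, V) = c s(U, X l) := f3 e9.symm e8 e7 e11.symm e10.symm
    have hAC : c s(U, X j) = c s(Y l, Z l) := f3 e11 e12.symm e13.symm e9 e10
    have e5' := e5; rw [hDA] at e5'
    have hDB : c s(Z i, V) = c s(X l, Y l) := f3 e10.symm e5' e6 e11 e9.symm
    have e3' := e3; rw [hDB] at e3'
    have e4' := e4; rw [hDA] at e4'
    have hCC : c s(Y i, Z i) = c s(Y l, Z l) := f3 e11 e3' e4' e9 e10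
    have e1' := e1; rw [hCC] at e1'
    have e2' := e2; rw [hDB] at e2'
    have hBA : c s(X i, Y i) = c s(U, X l) := f3 e9 e1' e2' e10.symm e11.symm
    simp only [cA, cB, cC, cD, Sp] at ha ⊢
    refine Or.inr (Or.inl ⟨hCC.trans (hAC.symm.trans ha.symm), ?_, ?_, ?_⟩)
    · rw [hBA, hCC]; exact e10.symm
    · rw [hCC, hDB]; exact e9
    · rw [hBA, hDB]; exact e11.symm



def flip : Vtx k → Vtx k
  | U => V
  | V => U
  | X i => Z i
  | Y i => Y i
  | Z i => X i

lemma flip_adj {a b : Vtx k} (h : adj a b) : adj (flip a) (flip b) := by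
  cases a <;> cases b <;> simp_all [adj, flip]

def flipHom : theta k →g theta k := ⟨flip, flip_adj⟩

lemma flip_invol : Function.Involutive (flip (k := k)) := by
  intro a; cases a <;> rfl

def SpZ (c : Sym2 (Vtx k) → Fin 3) (m : Fin k) : Prop :=
  cB c m = cD c m ∧ cC c m ≠ cB c m ∧ cB c m ≠ cA c m ∧ cC c m ≠ cA c m

lemma flip_cA (c : Sym2 (Vtx k) → Fin 3) (i : Fin k) :
    cA (fun e => c (Sym2.map flip e)) i = cD c i := by
  show c (Sym2.map flip s(U, X i)) = c s(Z i, V)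
  rw [Sym2.map_pair_eq]
  exact congrArg c Sym2.eq_swap

lemma flip_cB (c : Sym2 (Vtx k) → Fin 3) (i : Fin k) :
    cB (fun e => c (Sym2.map flip e)) i = cC c i := by
  show c (Sym2.map flip s(X i, Y i)) = c s(Y i, Z i)
  rw [Sym2.map_pair_eq]
  exact congrArg c Sym2.eq_swap

lemma flip_cC (c : Sym2 (Vtx k) → Fin 3) (i : Fin k) :
    cC (fun e => c (Sym2.map flip e)) i = cB c i := by
  show c (Sym2.map flip s(Y i, Z i)) = c s(X i, Y i)
  rw [Sym2.map_pair_eq]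
  exact congrArg c Sym2.eq_swap

lemma flip_cD (c : Sym2 (Vtx k) → Fin 3) (i : Fin k) :
    cD (fun e => c (Sym2.map flip e)) i = cA c i := by
  show c (Sym2.map flip s(Z i, V)) = c s(U, X i)
  rw [Sym2.map_pair_eq]
  exact congrArg c Sym2.eq_swap

lemma Zalg (c : Sym2 (Vtx k) → Fin 3) {i j : Fin k} (hij : i ≠ j) (hd : cD c i = cD c j)
    (hex : ∃ p : (theta k).Walk (Z i) (Z j), p.IsPath ∧ StronglyProperSeq (p.edges.map c)) :
    (cB c i = cB c j ∧ cC c i = cA c j ∧ cC c j = cA c i ∧ cA c i ≠ cA c j) ∨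
      SpZ c i ∨ SpZ c j := by
  obtain ⟨p, hp, hsp⟩ := hex
  set c' : Sym2 (Vtx k) → Fin 3 := fun e => c (Sym2.map flip e) with hc'
  have hinj : Function.Injective (flip (k := k)) := flip_invol.injective
  have hmap : StronglyProperSeq ((((p.map flipHom)).edges).map c') := by
    rw [Walk.edges_map, List.map_map]
    have : (c' ∘ Sym2.map flipHom) = c := by
      funext e
      show c (Sym2.map flip (Sym2.map flip e)) = c e
      rw [Sym2.map_map]
      have : (flip ∘ flip) = (id : Vtx k → Vtx k) := funext flip_invol
      rw [show Sym2.map (flip ∘ flip (k := k)) e = e by rw [this, Sym2.map_id]; rfl]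
    rwa [this]
  have hXalg := Xalg c' hij (by rw [flip_cA, flip_cA]; exact hd)
    ⟨p.map flipHom, Walk.map_isPath_of_injective hinj hp, hmap⟩
  simp only [Sp, hc'] at hXalg
  rw [flip_cA, flip_cA, flip_cB, flip_cB, flip_cC, flip_cC, flip_cD, flip_cD] at hXalg
  rcases hXalg with ⟨h1, h2, h3, h4⟩ | ⟨s1, s2, s3, s4⟩ | ⟨s1, s2, s3, s4⟩
  · exact Or.inl ⟨h1, h2, h3, h4⟩
  · exact Or.inr (Or.inl ⟨s1, s2, s3, s4⟩)
  · exact Or.inr (Or.inr ⟨s1, s2, s3, s4⟩)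

lemma fiber2 : ∀ t : Fin 3, (((Finset.univ : Finset (Fin 3 × Fin 3))).filter
    (fun z => z.1 ≠ t ∧ z.2 ≠ t ∧ z.1 ≠ z.2)).card = 2 := by decide

lemma dup_kill (c : Sym2 (Vtx k) → Fin 3) (hspc : IsStronglyProperConnected (theta k) c)
    {i j : Fin k} (hij : i ≠ j) (hA : cA c i = cA c j) (hB : cB c i = cB c j)
    (hC : cC c i = cC c j) (hD : cD c i = cD c j) : False := by
  have hexX : ∃ p : (theta k).Walk (X i) (X j), p.IsPath ∧
      StronglyProperSeq (p.edges.map c) := hspc _ _ (by simpa using hij)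
  have hexZ : ∃ p : (theta k).Walk (Z i) (Z j), p.IsPath ∧
      StronglyProperSeq (p.edges.map c) := hspc _ _ (by simpa using hij)
  have hCA : cC c i = cA c i := by
    rcases Xalg c hij hA hexX with ⟨_, _, _, h4⟩ | ⟨s1, _, _, _⟩ | ⟨s1, _, _, _⟩
    · exact absurd hD h4
    · exact s1
    · rw [hC, hA]; exact s1
  rcases Zalg c hij hD hexZ with ⟨_, _, _, h4⟩ | ⟨_, _, _, s4⟩ | ⟨_, _, _, s4⟩
  · exact absurd hA h4
  · exact s4 hCA
  · rw [← hC, ← hA] at s4; exact s4 hCA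

lemma noColoring (hk : 13 ≤ k) (c : Sym2 (Vtx k) → Fin 3) :
    ¬ IsStronglyProperConnected (theta k) c := by
  classical
  intro hspc
  obtain ⟨t, -, ht⟩ : ∃ t ∈ (Finset.univ : Finset (Fin 3)), 4 <
      ((Finset.univ : Finset (Fin k)).filter fun i => cA c i = t).card := by
    apply Finset.exists_lt_card_fiber_of_mul_lt_card_of_maps_to
      (fun a _ => Finset.mem_univ (cA c a))
    simp only [Finset.card_univ, Fintype.card_fin, Fintype.card_fin]
    omega
  set s : Finset (Fin k) := (Finset.univ.filter fun i => cA c i = t) with hs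
  have hsA : ∀ m ∈ s, cA c m = t := by
    intro m hm
    exact (Finset.mem_filter.mp hm).2
  by_cases h3 : 2 < (s.filter fun m => ¬ Sp c m).card
  · obtain ⟨i, hi, j, hj, m, hm, hij, him, hjm⟩ := Finset.two_lt_card.mp h3
    have hns : ∀ a ∈ s.filter fun m => ¬ Sp c m, ¬ Sp c a ∧ cA c a = t := by
      intro a ha
      obtain ⟨h1, h2⟩ := Finset.mem_filter.mp ha
      exact ⟨h2, hsA a h1⟩
    obtain ⟨hnsi, hti⟩ := hns i hi
    obtain ⟨hnsj, htj⟩ := hns j hj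
    obtain ⟨hnsm, htm⟩ := hns m hm
    have X2ij := (Xalg c hij (hti.trans htj.symm)
      (hspc _ _ (by simpa using hij))).resolve_right (by tauto)
    have X2im := (Xalg c him (hti.trans htm.symm)
      (hspc _ _ (by simpa using him))).resolve_right (by tauto)
    have X2jm := (Xalg c hjm (htj.trans htm.symm)
      (hspc _ _ (by simpa using hjm))).resolve_right (by tauto)
    -- cB i = cD j, cB i = cD m, cD j ≠ cD m
    have e1 := X2ij.2.1
    have e2 := X2im.2.1
    have e3 := X2jm.2.2.2
    rw [← e1, ← e2] at e3
    exact e3 rfl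
  · -- at least 3 special branches
    push_neg at h3
    have hsp3 : 2 < (s.filter fun m => Sp c m).card := by
      have := Finset.card_filter_add_card_filter_not (s := s) (p := fun m => Sp c m)
      omega
    have hmaps : ∀ a ∈ s.filter fun m => Sp c m,
        (fun m => (cB c m, cD c m)) a ∈ (Finset.univ : Finset (Fin 3 × Fin 3)).filter
          (fun z => z.1 ≠ t ∧ z.2 ≠ t ∧ z.1 ≠ z.2) := by
      intro a ha
      obtain ⟨has, hspa⟩ := Finset.mem_filter.mp ha
      obtain ⟨s1, s2, s3, s4⟩ := hspa
      have hat : cA c a = t := hsA a has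
      refine Finset.mem_filter.mpr ⟨Finset.mem_univ _, ?_, ?_, s4⟩
      · rw [← hat, ← s1]; exact s2
      · rw [← hat, ← s1]; exact fun h => s3 h.symm
    obtain ⟨i, hi, j, hj, hij, heq⟩ :=
      Finset.exists_ne_map_eq_of_card_lt_of_maps_to
        (s := s.filter fun m => Sp c m)
        (t := (Finset.univ : Finset (Fin 3 × Fin 3)).filter
          (fun z => z.1 ≠ t ∧ z.2 ≠ t ∧ z.1 ≠ z.2)) (f := fun m => (cB c m, cD c m))
        (by rw [fiber2 t]; omega) (by intro a ha; exact hmaps a ha)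
    obtain ⟨his, hspi⟩ := Finset.mem_filter.mp hi
    obtain ⟨hjs, hspj⟩ := Finset.mem_filter.mp hj
    have hBij : cB c i = cB c j := congrArg Prod.fst heq
    have hDij : cD c i = cD c j := congrArg Prod.snd heq
    have hAij : cA c i = cA c j := (hsA i his).trans (hsA j hjs).symm
    have hCij : cC c i = cC c j := by
      rw [hspi.1, hspj.1, hAij]
    exact dup_kill c hspc hij hAij hBij hCij hDij

lemma bipartite_theta (k : ℕ) :
    ∃ W : Set (Vtx k), (∀ u v, u ∈ W → v ∈ W → ¬ (theta k).Adj u v) ∧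
      (∀ u v, u ∉ W → v ∉ W → ¬ (theta k).Adj u v) := by
  refine ⟨{w | w = U ∨ w = V ∨ ∃ i, w = Y i}, ?_, ?_⟩
  · intro u v hu hv hadj
    simp only [Set.mem_setOf_eq] at hu hv
    rcases hu with rfl | rfl | ⟨i, rfl⟩ <;> rcases hv with rfl | rfl | ⟨i', rfl⟩ <;>
      simp_all [theta, adj]
  · intro u v hu hv hadj
    simp only [Set.mem_setOf_eq] at hu hv
    push_neg at hu hv
    cases u <;> cases v <;> simp_all [theta, adj]

lemma kconn_theta (k : ℕ) (hk : 2 ≤ k) :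
    2 < Nat.card (Vtx k) ∧
      ∀ S : Set (Vtx k), S.Finite → S.ncard < 2 → ((theta k).induce Sᶜ).Connected := by
  constructor
  · rw [card_vtx]; omega
  · intro S hfin hcard
    apply conn hk
    intro a b ha hb
    simp only [Set.mem_compl_iff, not_not] at ha hb
    by_contra hne
    have : 1 < S.ncard := (Set.one_lt_ncard_iff hfin).mpr ⟨a, b, ha, hb, hne⟩
    omega

lemma main_theta (n : ℕ) :
    ∃ (V : Type) (G : SimpleGraph V),
      (∃ W : Set V, (∀ u v, u ∈ W → v ∈ W → ¬ G.Adj u v) ∧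
        (∀ u v, u ∉ W → v ∉ W → ¬ G.Adj u v)) ∧
      (2 < Nat.card V ∧
        ∀ S : Set V, S.Finite → S.ncard < 2 → (G.induce Sᶜ).Connected) ∧
      n < Nat.card V ∧
      ¬ ∃ c : Sym2 V → Fin 3, IsStronglyProperConnected G c := by
  refine ⟨Vtx (n + 13), theta (n + 13), bipartite_theta _, kconn_theta _ (by omega), ?_, ?_⟩
  · rw [card_vtx]; omega
  · rintro ⟨c, hc⟩
    exact noColoring (by omega) c hc

end ThetaGadget

/-- There are infinitely many bipartite 2-connected graphs `G` with `spc(G) ≥ 4`: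
for every `n` there is one with more than `n` vertices for which no edge coloring
with 3 colors is strongly proper connected. -/
theorem infinitely_many_bipartite_two_connected_spc_ge_four (n : ℕ) :
    ∃ (V : Type) (G : SimpleGraph V), Bipartite G ∧ KConnected 2 G ∧
      n < Nat.card V ∧
      ¬ ∃ c : Sym2 V → Fin 3, IsStronglyProperConnected G c := by
  obtain ⟨V, G, hbip, hkc, hcard, hnc⟩ := ThetaGadget.main_theta n
  exact ⟨V, G, hbip, hkc, hcard, hnc⟩
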